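/- Let V be a Gödel set in which 0 is not isolated (i.e., V ∩ (0,ε) ≠ ∅ for every ε > 0), and let L contain a unary predicate A. Then the sentence F := ¬∀x A(x) ∧ ∀x ¬¬A(x) has no logically equivalent prenex sentence in G_V: there is no prenex L-sentence P with I(F)=I(P) for every V-interpretation I. -/

import Mathlib

namespace GodelPaper

/-- A first-order language: function and relation symbols of each arity. -/
structure Lang where
  Func : ℕ → Type
  Rel : ℕ → Type

/-- A Gödel set: a closed subset of [0,1] containing 0 and 1. -/
def GodelSet (V : Set ℝ) : Prop :=
  IsClosed V ∧ V ⊆ Set.Icc 0 1 ∧ (0:ℝ) ∈ V ∧ (1:ℝ) ∈ V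

/-- Terms with variables from `α`. -/
inductive Term (L : Lang) (α : Type) : Type
  | var : α → Term L α
  | func : ∀ {k}, L.Func k → (Fin k → Term L α) → Term L α

/-- A `V`-interpretation: nonempty domain, interpretation of function symbols,
and truth values in `V` for atomic sentences with parameters. -/
structure Interp (L : Lang) (V : Set ℝ) where
  Dom : Type
  dom_nonempty : Nonempty Dom
  funMap : ∀ {k}, L.Func k → (Fin k → Dom) → Dom
  relVal : ∀ {k}, L.Rel k → (Fin k → Dom) → ℝ
  relVal_mem : ∀ {k} (R : L.Rel k) (v : Fin k → Dom), relVal R v ∈ V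

def Term.eval {L : Lang} {V : Set ℝ} (I : Interp L V) {α : Type} (v : α → I.Dom) :
    Term L α → I.Dom
  | .var i => v i
  | .func f ts => I.funMap f fun j => Term.eval I v (ts j)

/-- Formulas of the Δ-extended language, with free variables among `Fin n`.
The quantifiers bind the *last* variable. Δ-free formulas (i.e. formulas of the
plain language) are singled out by the predicate `DeltaFree` below. -/
inductive Form (L : Lang) : ℕ → Type
  | falsum : ∀ {n}, Form L n
  | atom : ∀ {n k}, L.Rel k → (Fin k → Term L (Fin n)) → Form L n
  | conj : ∀ {n}, Form L n → Form L n → Form L n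
  | disj : ∀ {n}, Form L n → Form L n → Form L n
  | impl : ∀ {n}, Form L n → Form L n → Form L n
  | delta : ∀ {n}, Form L n → Form L n
  | all : ∀ {n}, Form L (n+1) → Form L n
  | ex : ∀ {n}, Form L (n+1) → Form L n

/-- The Gödel truth value of a formula under an interpretation and an
assignment of the free variables. -/
noncomputable def Form.val {L : Lang} {V : Set ℝ} (I : Interp L V) :
    ∀ {n}, Form L n → (Fin n → I.Dom) → ℝ
  | _, .falsum, _ => 0
  | _, .atom R ts, ρ => I.relVal R fun j => Term.eval I ρ (ts j)
  | _, .conj A B, ρ => min (Form.val I A ρ) (Form.val I B ρ)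
  | _, .disj A B, ρ => max (Form.val I A ρ) (Form.val I B ρ)
  | _, .impl A B, ρ => if Form.val I A ρ ≤ Form.val I B ρ then 1 else Form.val I B ρ
  | _, .delta A, ρ => if Form.val I A ρ = 1 then 1 else 0
  | _, .all A, ρ => sInf {v : ℝ | ∃ d : I.Dom, v = Form.val I A (Fin.snoc ρ d)}
  | _, .ex A, ρ => sSup {v : ℝ | ∃ d : I.Dom, v = Form.val I A (Fin.snoc ρ d)}

/-- The value of a sentence. -/
noncomputable def Form.sval {L : Lang} {V : Set ℝ} (I : Interp L V) (A : Form L 0) : ℝ :=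
  Form.val I A Fin.elim0

/-- `A` is valid in `G_V`. -/
def Valid {L : Lang} (V : Set ℝ) (A : Form L 0) : Prop :=
  ∀ I : Interp L V, Form.sval I A = 1

/-- `A` is 1-satisfiable in `G_V`. -/
def OneSat {L : Lang} (V : Set ℝ) (A : Form L 0) : Prop :=
  ∃ I : Interp L V, Form.sval I A = 1

/-- `A` is classically satisfiable: it takes value 1 under a `V`-interpretation
assigning only values in {0,1} to atomic sentences. -/
def ClassSat {L : Lang} (V : Set ℝ) (A : Form L 0) : Prop :=
  ∃ I : Interp L V,
    (∀ {k : ℕ} (R : L.Rel k) (v : Fin k → I.Dom), I.relVal R v = 0 ∨ I.relVal R v = 1) ∧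
    Form.sval I A = 1

/-- ¬A abbreviates A ⊃ ⊥. -/
def Form.not {L : Lang} {n : ℕ} (A : Form L n) : Form L n := Form.impl A Form.falsum

/-- A ↔ B abbreviates (A ⊃ B) ∧ (B ⊃ A). -/
def Form.iff {L : Lang} {n : ℕ} (A B : Form L n) : Form L n :=
  Form.conj (Form.impl A B) (Form.impl B A)

/-- Formulas of the plain language (no Δ). -/
def DeltaFree {L : Lang} : ∀ {n}, Form L n → Prop
  | _, .falsum => True
  | _, .atom _ _ => True
  | _, .conj A B => DeltaFree A ∧ DeltaFree B
  | _, .disj A B => DeltaFree A ∧ DeltaFree B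
  | _, .impl A B => DeltaFree A ∧ DeltaFree B
  | _, .delta _ => False
  | _, .all A => DeltaFree A
  | _, .ex A => DeltaFree A

/-- Quantifier-free formulas. -/
def QuantFree {L : Lang} : ∀ {n}, Form L n → Prop
  | _, .falsum => True
  | _, .atom _ _ => True
  | _, .conj A B => QuantFree A ∧ QuantFree B
  | _, .disj A B => QuantFree A ∧ QuantFree B
  | _, .impl A B => QuantFree A ∧ QuantFree B
  | _, .delta A => QuantFree A
  | _, .all _ => False
  | _, .ex _ => False

/-- Formulas containing no universal quantifier. -/
def AllFree {L : Lang} : ∀ {n}, Form L n → Prop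
  | _, .falsum => True
  | _, .atom _ _ => True
  | _, .conj A B => AllFree A ∧ AllFree B
  | _, .disj A B => AllFree A ∧ AllFree B
  | _, .impl A B => AllFree A ∧ AllFree B
  | _, .delta A => AllFree A
  | _, .all _ => False
  | _, .ex A => AllFree A

/-- Prenex formulas: a block of quantifiers followed by a quantifier-free matrix. -/
inductive IsPrenex {L : Lang} : ∀ {n}, Form L n → Prop
  | qf {n} {A : Form L n} : QuantFree A → IsPrenex A
  | all {n} {A : Form L (n+1)} : IsPrenex A → IsPrenex (Form.all A)
  | ex {n} {A : Form L (n+1)} : IsPrenex A → IsPrenex (Form.ex A)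

/-- Purely existential prenex formulas. -/
inductive ExPrenex {L : Lang} : ∀ {n}, Form L n → Prop
  | qf {n} {A : Form L n} : QuantFree A → ExPrenex A
  | ex {n} {A : Form L (n+1)} : ExPrenex A → ExPrenex (Form.ex A)

/-- The glued interpretation `I_ω`: atoms with value ≤ ω keep their value,
all other atoms get value 1. Same domain and function interpretations. -/
noncomputable def Interp.glue {L : Lang} {V : Set ℝ} (I : Interp L V) (ω : ℝ)
    (h1 : (1:ℝ) ∈ V) : Interp L V where
  Dom := I.Dom
  dom_nonempty := I.dom_nonempty
  funMap := fun {k} f v => I.funMap f v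
  relVal := fun {k} R v => if I.relVal R v ≤ ω then I.relVal R v else 1
  relVal_mem := fun {k} R v => by
    by_cases h : I.relVal R v ≤ ω
    · simpa [h] using I.relVal_mem R v
    · simpa [h] using h1

/-- The Gödel set `V_↑ = {1 - 1/k : k ≥ 1} ∪ {1}`. -/
def Vup : Set ℝ := {x : ℝ | ∃ k : ℕ, 1 ≤ k ∧ x = 1 - 1/(k:ℝ)} ∪ {1}

/-- The `m`-element Gödel set `V_m = {1 - 1/k : 1 ≤ k ≤ m-1} ∪ {1}`. -/
def Vfin (m : ℕ) : Set ℝ :=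
  {x : ℝ | ∃ k : ℕ, 1 ≤ k ∧ k ≤ m - 1 ∧ x = 1 - 1/(k:ℝ)} ∪ {1}

/-- Atomic formula built from a unary predicate. -/
def atom1 {L : Lang} (P : L.Rel 1) {n : ℕ} (t : Term L (Fin n)) : Form L n :=
  Form.atom P fun _ => t

/-- Atomic formula built from a 0-ary predicate (propositional atom). -/
def atom0 {L : Lang} (X : L.Rel 0) {n : ℕ} : Form L n :=
  Form.atom X fun i => i.elim0

def Term.rename {L : Lang} {α β : Type} (f : α → β) : Term L α → Term L β
  | .var i => .var (f i)
  | .func g ts => .func g fun j => Term.rename f (ts j)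

def Form.rename {L : Lang} : ∀ {m n}, (Fin m → Fin n) → Form L m → Form L n
  | _, _, _, .falsum => .falsum
  | _, _, f, .atom R ts => .atom R fun j => (ts j).rename f
  | _, _, f, .conj A B => .conj (A.rename f) (B.rename f)
  | _, _, f, .disj A B => .disj (A.rename f) (B.rename f)
  | _, _, f, .impl A B => .impl (A.rename f) (B.rename f)
  | _, _, f, .delta A => .delta (A.rename f)
  | _, _, f, .all A =>
      .all (A.rename (Fin.lastCases (Fin.last _) fun i => Fin.castSucc (f i)))
  | _, _, f, .ex A =>
      .ex (A.rename (Fin.lastCases (Fin.last _) fun i => Fin.castSucc (f i)))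

/-- Weakening: regard a formula with `n` free variables as one with `n+1`
free variables (not using the new last variable). -/
def Form.lift {L : Lang} {n : ℕ} (A : Form L n) : Form L (n+1) :=
  A.rename Fin.castSucc

def Term.subst {L : Lang} {α β : Type} (σ : α → Term L β) : Term L α → Term L β
  | .var i => σ i
  | .func g ts => .func g fun j => Term.subst σ (ts j)

def Form.subst {L : Lang} : ∀ {m n}, (Fin m → Term L (Fin n)) → Form L m → Form L n
  | _, _, _, .falsum => .falsum
  | _, _, σ, .atom R ts => .atom R fun j => (ts j).subst σ
  | _, _, σ, .conj A B => .conj (A.subst σ) (B.subst σ)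
  | _, _, σ, .disj A B => .disj (A.subst σ) (B.subst σ)
  | _, _, σ, .impl A B => .impl (A.subst σ) (B.subst σ)
  | _, _, σ, .delta A => .delta (A.subst σ)
  | _, _, σ, .all A =>
      .all (A.subst (Fin.lastCases (.var (Fin.last _))
        fun i => (σ i).rename Fin.castSucc))
  | _, _, σ, .ex A =>
      .ex (A.subst (Fin.lastCases (.var (Fin.last _))
        fun i => (σ i).rename Fin.castSucc))

/-- The language `L ∪ {f}` with one new function symbol of arity `a`. -/
def Lang.addFunc (L : Lang) (a : ℕ) : Lang where
  Func := fun k => L.Func k ⊕ PLift (k = a)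
  Rel := L.Rel

/-- The new function symbol of `L.addFunc a`. -/
def newFunc (L : Lang) (a : ℕ) : (L.addFunc a).Func a := Sum.inr ⟨rfl⟩

def Term.emb {L : Lang} {a : ℕ} {α : Type} : Term L α → Term (L.addFunc a) α
  | .var i => .var i
  | .func g ts => .func (Sum.inl g) fun j => Term.emb (ts j)

/-- Embedding of `L`-formulas into the language with the extra function symbol. -/
def Form.emb {L : Lang} {a : ℕ} : ∀ {n}, Form L n → Form (L.addFunc a) n
  | _, .falsum => .falsum
  | _, .atom R ts => .atom R fun j => (ts j).emb
  | _, .conj A B => .conj A.emb B.emb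
  | _, .disj A B => .disj A.emb B.emb
  | _, .impl A B => .impl A.emb B.emb
  | _, .delta A => .delta A.emb
  | _, .all A => .all A.emb
  | _, .ex A => .ex A.emb

/-- Prefix of `n` existential quantifiers (outermost quantifier binds variable 0). -/
def Form.exN {L : Lang} : ∀ n, Form L n → Form L 0
  | 0, A => A
  | n+1, A => Form.exN n (Form.ex A)

/-- Prefix of `n` universal quantifiers (outermost quantifier binds variable 0). -/
def Form.allN {L : Lang} : ∀ n, Form L n → Form L 0
  | 0, A => A
  | n+1, A => Form.allN n (Form.all A)

section Stmt5Aux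

variable {L : Lang} {V : Set ℝ}

lemma val_mem_Icc (I : Interp L V) (hV01 : V ⊆ Set.Icc 0 1) :
    ∀ {n} (A : Form L n) (ρ : Fin n → I.Dom), Form.val I A ρ ∈ Set.Icc (0:ℝ) 1 := by
  intro n A
  induction A with
  | falsum => intro ρ; exact ⟨le_rfl, zero_le_one⟩
  | atom R ts => intro ρ; exact hV01 (I.relVal_mem _ _)
  | conj A B ihA ihB =>
      intro ρ
      exact ⟨le_min (ihA ρ).1 (ihB ρ).1, min_le_of_left_le (ihA ρ).2⟩
  | disj A B ihA ihB =>
      intro ρ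
      exact ⟨le_max_of_le_left (ihA ρ).1, max_le (ihA ρ).2 (ihB ρ).2⟩
  | impl A B ihA ihB =>
      intro ρ
      simp only [Form.val]
      split_ifs
      · exact ⟨zero_le_one, le_rfl⟩
      · exact ihB ρ
  | delta A ih =>
      intro ρ
      simp only [Form.val]
      split_ifs
      · exact ⟨zero_le_one, le_rfl⟩
      · exact ⟨le_rfl, zero_le_one⟩
  | all A ih =>
      intro ρ
      simp only [Form.val]
      obtain ⟨d⟩ := I.dom_nonempty
      have hbdd : BddBelow {v : ℝ | ∃ d : I.Dom, v = Form.val I A (Fin.snoc ρ d)} :=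
        ⟨0, by rintro x ⟨e, rfl⟩; exact (ih _).1⟩
      constructor
      · exact le_csInf ⟨_, d, rfl⟩ (by rintro b ⟨e, rfl⟩; exact (ih _).1)
      · exact le_trans (csInf_le hbdd ⟨d, rfl⟩) (ih _).2
  | ex A ih =>
      intro ρ
      simp only [Form.val]
      obtain ⟨d⟩ := I.dom_nonempty
      have hbdd : BddAbove {v : ℝ | ∃ d : I.Dom, v = Form.val I A (Fin.snoc ρ d)} :=
        ⟨1, by rintro x ⟨e, rfl⟩; exact (ih _).2⟩
      constructor
      · exact le_trans (ih _).1 (le_csSup hbdd ⟨d, rfl⟩)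
      · exact csSup_le ⟨_, d, rfl⟩ (by rintro b ⟨e, rfl⟩; exact (ih _).2)

lemma eval_glue (I : Interp L V) (ω : ℝ) (h1 : (1:ℝ) ∈ V) {α : Type} (v : α → I.Dom) :
    ∀ t : Term L α, Term.eval (I.glue ω h1) v t = Term.eval I v t := by
  intro t
  induction t with
  | var i => rfl
  | func f ts ih =>
      show I.funMap f (fun j => Term.eval (I.glue ω h1) v (ts j))
          = I.funMap f (fun j => Term.eval I v (ts j))
      exact congrArg _ (funext fun j => ih j)

private lemma g0_mono {a b : ℝ} (hab : a ≤ b) :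
    (if a ≤ (0:ℝ) then a else 1) ≤ (if b ≤ (0:ℝ) then b else 1) := by
  split_ifs <;> linarith

private lemma g0_min (a b : ℝ) :
    (if min a b ≤ (0:ℝ) then min a b else 1)
      = min (if a ≤ (0:ℝ) then a else 1) (if b ≤ (0:ℝ) then b else 1) := by
  rcases le_total a b with h | h
  · rw [min_eq_left h, min_eq_left (g0_mono h)]
  · rw [min_eq_right h, min_eq_right (g0_mono h)]

private lemma g0_max (a b : ℝ) :
    (if max a b ≤ (0:ℝ) then max a b else 1)
      = max (if a ≤ (0:ℝ) then a else 1) (if b ≤ (0:ℝ) then b else 1) := by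
  rcases le_total a b with h | h
  · rw [max_eq_right h, max_eq_right (g0_mono h)]
  · rw [max_eq_left h, max_eq_left (g0_mono h)]

private lemma g0_impl (a b : ℝ) :
    (if (if a ≤ (0:ℝ) then a else 1) ≤ (if b ≤ (0:ℝ) then b else 1) then (1:ℝ)
      else (if b ≤ (0:ℝ) then b else 1))
    = if (if a ≤ b then (1:ℝ) else b) ≤ 0 then (if a ≤ b then (1:ℝ) else b) else 1 := by
  split_ifs <;> linarith

lemma val_glue_qf (I : Interp L V) (h1 : (1:ℝ) ∈ V) :
    ∀ {n} (A : Form L n), QuantFree A → DeltaFree A → ∀ (ρ : Fin n → I.Dom),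
      Form.val (I.glue 0 h1) A ρ
        = if Form.val I A ρ ≤ 0 then Form.val I A ρ else 1 := by
  intro n A
  induction A with
  | falsum => intro _ _ ρ; simp [Form.val]
  | atom R ts =>
      intro _ _ ρ
      have ht : (fun j => Term.eval (I.glue 0 h1) ρ (ts j))
          = fun j => Term.eval I ρ (ts j) := funext fun j => eval_glue I 0 h1 ρ (ts j)
      calc Form.val (I.glue 0 h1) (.atom R ts) ρ
          = (I.glue 0 h1).relVal R (fun j => Term.eval (I.glue 0 h1) ρ (ts j)) := rfl
        _ = (I.glue 0 h1).relVal R (fun j => Term.eval I ρ (ts j)) := by rw [ht]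
        _ = _ := rfl
  | conj A B ihA ihB =>
      intro hq hd ρ
      show min (Form.val (I.glue 0 h1) A ρ) (Form.val (I.glue 0 h1) B ρ) = _
      rw [ihA hq.1 hd.1 ρ, ihB hq.2 hd.2 ρ]
      exact (g0_min _ _).symm
  | disj A B ihA ihB =>
      intro hq hd ρ
      show max (Form.val (I.glue 0 h1) A ρ) (Form.val (I.glue 0 h1) B ρ) = _
      rw [ihA hq.1 hd.1 ρ, ihB hq.2 hd.2 ρ]
      exact (g0_max _ _).symm
  | impl A B ihA ihB =>
      intro hq hd ρ
      show (if Form.val (I.glue 0 h1) A ρ ≤ Form.val (I.glue 0 h1) B ρ then (1:ℝ)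
          else Form.val (I.glue 0 h1) B ρ) = _
      rw [ihA hq.1 hd.1 ρ, ihB hq.2 hd.2 ρ]
      exact g0_impl _ _
  | delta A ih => intro _ hd _; exact hd.elim
  | all A ih => intro hq _ _; exact hq.elim
  | ex A ih => intro hq _ _; exact hq.elim

lemma val_glue_prenex (I : Interp L V) (h1 : (1:ℝ) ∈ V) (hV01 : V ⊆ Set.Icc 0 1) :
    ∀ {n} {A : Form L n}, IsPrenex A → DeltaFree A →
      ∀ (ρ : Fin n → I.Dom), Form.val I A ρ ≤ Form.val (I.glue 0 h1) A ρ := by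
  intro n A hpre
  induction hpre with
  | qf hq =>
      intro hd ρ
      rw [val_glue_qf I h1 _ hq hd ρ]
      split_ifs with h
      · exact le_rfl
      · exact (val_mem_Icc I hV01 _ ρ).2
  | @all m A hA ih =>
      intro hd ρ
      show sInf {v : ℝ | ∃ d : I.Dom, v = Form.val I A (Fin.snoc ρ d)}
          ≤ sInf {v : ℝ | ∃ d : (I.glue 0 h1).Dom, v = Form.val (I.glue 0 h1) A (Fin.snoc ρ d)}
      obtain ⟨d0⟩ := I.dom_nonempty
      refine le_csInf ⟨Form.val (I.glue 0 h1) A (Fin.snoc ρ d0), d0, rfl⟩ ?_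
      rintro b ⟨d, rfl⟩
      have hbdd : BddBelow {v : ℝ | ∃ d : I.Dom, v = Form.val I A (Fin.snoc ρ d)} :=
        ⟨0, by rintro x ⟨e, rfl⟩; exact (val_mem_Icc I hV01 _ _).1⟩
      exact le_trans (csInf_le hbdd ⟨d, rfl⟩) (ih hd _)
  | @ex m A hA ih =>
      intro hd ρ
      show sSup {v : ℝ | ∃ d : I.Dom, v = Form.val I A (Fin.snoc ρ d)}
          ≤ sSup {v : ℝ | ∃ d : (I.glue 0 h1).Dom, v = Form.val (I.glue 0 h1) A (Fin.snoc ρ d)}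
      obtain ⟨d0⟩ := I.dom_nonempty
      refine csSup_le ⟨Form.val I A (Fin.snoc ρ d0), d0, rfl⟩ ?_
      rintro b ⟨d, rfl⟩
      have hbdd : BddAbove {v : ℝ | ∃ d : (I.glue 0 h1).Dom,
          v = Form.val (I.glue 0 h1) A (Fin.snoc ρ d)} :=
        ⟨1, by rintro x ⟨e, rfl⟩; exact (val_mem_Icc (I.glue 0 h1) hV01 _ _).2⟩
      exact le_trans (ih hd _) (le_csSup hbdd ⟨d, rfl⟩)

open Classical in
/-- The interpretation on domain `ℕ` where the unary predicate `P` gets value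
`c k` at `k` and every other atom gets value 1. -/
noncomputable def seqInterp (L : Lang) {V : Set ℝ} (P : L.Rel 1) (c : ℕ → ℝ)
    (hcV : ∀ n, c n ∈ V) (h1 : (1:ℝ) ∈ V) : Interp L V where
  Dom := ℕ
  dom_nonempty := ⟨0⟩
  funMap := fun _ _ => 0
  relVal := fun {k} R v =>
    if h : k = 1 then (if HEq R P then c (v ⟨0, by omega⟩) else 1) else 1
  relVal_mem := by
    intro k R v
    split
    · split
      · exact hcV _
      · exact h1
    · exact h1

open Classical in
lemma seqInterp_relVal_P {P : L.Rel 1} {c : ℕ → ℝ} {hcV : ∀ n, c n ∈ V}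
    {h1 : (1:ℝ) ∈ V} (v : Fin 1 → ℕ) :
    (seqInterp L P c hcV h1).relVal P v = c (v 0) := by
  show (if h : (1:ℕ) = 1 then (if HEq P P then c (v ⟨0, by omega⟩) else 1) else 1) = c (v 0)
  rw [dif_pos rfl, if_pos HEq.rfl]
  exact congrArg (fun i => c (v i)) (Subsingleton.elim _ _)

end Stmt5Aux

/-- If 0 is not isolated in the Gödel set `V` and `L` contains a
unary predicate `P`, then the sentence `F = ¬∀x P(x) ∧ ∀x ¬¬P(x)` has no
logically equivalent prenex sentence in `G_V`. -/
theorem stmt_5 {L : Lang} {V : Set ℝ} (hV : GodelSet V)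
    (h0 : ∀ ε > (0:ℝ), (V ∩ Set.Ioo 0 ε).Nonempty) (P : L.Rel 1) :
    ¬ ∃ Q : Form L 0, IsPrenex Q ∧ DeltaFree Q ∧
        ∀ I : Interp L V,
          Form.sval I
            (Form.conj (Form.not (Form.all (atom1 P (Term.var 0))))
              (Form.all (Form.not (Form.not (atom1 P (Term.var 0)))))) =
          Form.sval I Q := by
  rintro ⟨Q, hpre, hdf, heq⟩
  obtain ⟨-, hV01, -, hV1⟩ := hV
  have hex : ∀ n : ℕ, ∃ x, x ∈ V ∧ 0 < x ∧ x < 1/((n:ℝ)+1) := by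
    intro n
    obtain ⟨x, hxV, hx1, hx2⟩ := h0 (1/((n:ℝ)+1)) (by positivity)
    exact ⟨x, hxV, hx1, hx2⟩
  choose c hcV hcpos hclt using hex
  set I : Interp L V := seqInterp L P c hcV hV1 with hI
  have hrel : ∀ v : Fin 1 → ℕ, I.relVal P v = c (v 0) := fun v => seqInterp_relVal_P v
  have hsnoc : ∀ d : ℕ, (Fin.snoc (Fin.elim0) d : Fin 1 → ℕ) 0 = d := by
    intro d; simp [Fin.snoc]
  -- the value of the atom in I
  have hAt : ∀ ρ : Fin 1 → ℕ, Form.val I (atom1 P (Term.var 0)) ρ = c (ρ 0) := by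
    intro ρ
    show I.relVal P (fun _ => Term.eval I ρ (Term.var 0)) = c (ρ 0)
    exact hrel _
  have hinst : ∀ d : ℕ,
      Form.val I (atom1 P (Term.var 0)) (Fin.snoc Fin.elim0 d) = c d := by
    intro d; exact (hAt _).trans (congrArg c (hsnoc d))
  -- value of ∀x A(x) in I is 0
  have hall : Form.val I (Form.all (atom1 P (Term.var 0))) Fin.elim0 = 0 := by
    show sInf {v : ℝ | ∃ d : ℕ,
        v = Form.val I (atom1 P (Term.var 0)) (Fin.snoc Fin.elim0 d)} = 0
    have hset : {v : ℝ | ∃ d : ℕ,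
        v = Form.val I (atom1 P (Term.var 0)) (Fin.snoc Fin.elim0 d)}
        = {v : ℝ | ∃ d : ℕ, v = c d} := by
      ext x; simp only [Set.mem_setOf_eq, hinst]
    rw [hset]
    have hbdd : BddBelow {v : ℝ | ∃ d : ℕ, v = c d} :=
      ⟨0, by rintro x ⟨d, rfl⟩; exact (hcpos d).le⟩
    apply le_antisymm
    · by_contra hpos
      push_neg at hpos
      obtain ⟨n, hn⟩ := exists_nat_one_div_lt hpos
      have h1n := csInf_le hbdd (Set.mem_setOf_eq ▸ ⟨n, rfl⟩ :
        c n ∈ {v : ℝ | ∃ d : ℕ, v = c d})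
      have := hclt n
      linarith
    · exact le_csInf ⟨c 0, 0, rfl⟩ (by rintro b ⟨d, rfl⟩; exact (hcpos d).le)
  -- first conjunct has value 1 in I
  have hC1 : Form.val I (Form.not (Form.all (atom1 P (Term.var 0)))) Fin.elim0 = 1 := by
    show (if Form.val I (Form.all (atom1 P (Term.var 0))) Fin.elim0 ≤ (0:ℝ)
        then (1:ℝ) else 0) = 1
    rw [hall, if_pos le_rfl]
  -- second conjunct has value 1 in I
  have hC2 : Form.val I
      (Form.all (Form.not (Form.not (atom1 P (Term.var 0))))) Fin.elim0 = 1 := by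
    show sInf {v : ℝ | ∃ d : ℕ, v = Form.val I
        (Form.not (Form.not (atom1 P (Term.var 0)))) (Fin.snoc Fin.elim0 d)} = 1
    have hv : ∀ d : ℕ, Form.val I
        (Form.not (Form.not (atom1 P (Term.var 0)))) (Fin.snoc Fin.elim0 d) = 1 := by
      intro d
      have h1 : Form.val I (Form.not (atom1 P (Term.var 0))) (Fin.snoc Fin.elim0 d) = 0 := by
        show (if Form.val I (atom1 P (Term.var 0)) (Fin.snoc Fin.elim0 d) ≤ (0:ℝ)
            then (1:ℝ) else 0) = 0
        rw [hinst d, if_neg (not_le.2 (hcpos d))]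
      show (if Form.val I (Form.not (atom1 P (Term.var 0))) (Fin.snoc Fin.elim0 d) ≤ (0:ℝ)
          then (1:ℝ) else 0) = 1
      rw [h1, if_pos le_rfl]
    have hset : {v : ℝ | ∃ d : ℕ, v = Form.val I
        (Form.not (Form.not (atom1 P (Term.var 0)))) (Fin.snoc Fin.elim0 d)}
        = {(1:ℝ)} := by
      ext x; simp [hv]
    rw [hset, csInf_singleton]
  -- F has value 1 in I, hence so does Q
  have hQ1 : Form.sval I Q = 1 := by
    rw [← heq I]
    show min (Form.val I (Form.not (Form.all (atom1 P (Term.var 0)))) Fin.elim0)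
      (Form.val I (Form.all (Form.not (Form.not (atom1 P (Term.var 0))))) Fin.elim0) = 1
    rw [hC1, hC2, min_self]
  -- pass to the glued (crisp) interpretation J
  set J : Interp L V := I.glue 0 hV1 with hJ
  have hJQ : Form.sval J Q = 1 := by
    refine le_antisymm (val_mem_Icc J hV01 Q Fin.elim0).2 ?_
    have h := val_glue_prenex I hV1 hV01 hpre hdf Fin.elim0
    have h' : Form.sval I Q ≤ Form.sval J Q := h
    rw [hQ1] at h'
    exact h'
  have hJF : Form.sval J
      (Form.conj (Form.not (Form.all (atom1 P (Term.var 0))))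
        (Form.all (Form.not (Form.not (atom1 P (Term.var 0)))))) = 1 := by
    rw [heq J]; exact hJQ
  -- but the atom has value 1 everywhere in J, so F has value 0 in J
  have hJAt : ∀ ρ : Fin 1 → ℕ, Form.val J (atom1 P (Term.var 0)) ρ = 1 := by
    intro ρ
    show (if I.relVal P (fun _ => Term.eval J ρ (Term.var 0)) ≤ (0:ℝ)
        then I.relVal P (fun _ => Term.eval J ρ (Term.var 0)) else 1) = 1
    have hrel' := hrel (fun _ => Term.eval J ρ (Term.var 0))
    rw [hrel']
    exact if_neg (not_le.2 (hcpos _))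
  have hJall : Form.val J (Form.all (atom1 P (Term.var 0))) Fin.elim0 = 1 := by
    show sInf {v : ℝ | ∃ d : ℕ,
        v = Form.val J (atom1 P (Term.var 0)) (Fin.snoc Fin.elim0 d)} = 1
    have hset : {v : ℝ | ∃ d : ℕ,
        v = Form.val J (atom1 P (Term.var 0)) (Fin.snoc Fin.elim0 d)} = {(1:ℝ)} := by
      ext x; simp only [Set.mem_setOf_eq, Set.mem_singleton_iff]
      constructor
      · rintro ⟨d, hd⟩
        exact hd.trans (hJAt _)
      · intro hx
        exact ⟨0, hx.trans (hJAt _).symm⟩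
    rw [hset, csInf_singleton]
  have hle : Form.sval J
      (Form.conj (Form.not (Form.all (atom1 P (Term.var 0))))
        (Form.all (Form.not (Form.not (atom1 P (Term.var 0)))))) ≤ 0 := by
    show min (if Form.val J (Form.all (atom1 P (Term.var 0))) Fin.elim0 ≤ (0:ℝ)
        then (1:ℝ) else 0)
      (Form.val J (Form.all (Form.not (Form.not (atom1 P (Term.var 0))))) Fin.elim0) ≤ 0
    rw [hJall, if_neg (by norm_num : ¬ (1:ℝ) ≤ 0)]
    exact min_le_left _ _
  rw [hJF] at hle
  linarith


end GodelPaper
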